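/- Let x, y, z, q ∈ ℂ with q ∉ {0, 1, −1} and x, y, z ∉ {1, −1}, and set T = (1/2)[1/((1−x)(1−y)(1−z)) + 1/((1+x)(1+y)(1+z))] and U = (1/2)[1/((1−x)(1−y)(1−z)) − 1/((1+x)(1+y)(1+z))]. Then 1 + (1 − q^{−1})(−1 + T) = 1 + (1 + q^{−1})^{−1}(−1 + Q), where Q = (1 − q^{−2})[T + (1/(q²(1 − q^{−2})))(T − (x+y+z)U + (xy+xz+yz)T − xyz·U)]. -/

import Mathlib

set_option maxHeartbeats 1000000

lemma euler_key (s1 s2 s3 q : ℂ) (hq0 : q ≠ 0) (hqm : q - 1 ≠ 0) (hqp : q + 1 ≠ 0)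
    (hA0 : (1 : ℂ) - s1 + s2 - s3 ≠ 0) (hB0 : (1 : ℂ) + s1 + s2 + s3 ≠ 0) :
    1 + (1 - 1/q) * (-1 + (1 / 2) * (1 / (1 - s1 + s2 - s3) + 1 / (1 + s1 + s2 + s3))) =
    1 + (q/(q+1)) * (-1 + ((q-1)*(q+1)/q^2) *
      ((1 / 2) * (1 / (1 - s1 + s2 - s3) + 1 / (1 + s1 + s2 + s3)) +
        (1 / ((q-1) * (q+1))) *
        ((1 / 2) * (1 / (1 - s1 + s2 - s3) + 1 / (1 + s1 + s2 + s3))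
          - s1 * ((1 / 2) * (1 / (1 - s1 + s2 - s3) - 1 / (1 + s1 + s2 + s3)))
          + s2 * ((1 / 2) * (1 / (1 - s1 + s2 - s3) + 1 / (1 + s1 + s2 + s3)))
          - s3 * ((1 / 2) * (1 / (1 - s1 + s2 - s3) - 1 / (1 + s1 + s2 + s3)))))) := by
  set A := (1 : ℂ) - s1 + s2 - s3 with hA'
  set B := (1 : ℂ) + s1 + s2 + s3 with hB'
  clear_value A B
  have e5 : ∀ T V : ℂ, ((q - 1) * (q + 1) / q ^ 2) * (T + (1 / ((q - 1) * (q + 1))) * V) =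
      ((q - 1) * (q + 1) * T + V) / q ^ 2 := by
    intro T V
    field_simp
  have hD : (q + 1) * (2 * (A * B) * q ^ 2) ≠ 0 :=
    mul_ne_zero hqp (mul_ne_zero (mul_ne_zero two_ne_zero (mul_ne_zero hA0 hB0)) (pow_ne_zero 2 hq0))
  rw [e5]
  field_simp
  rw [hA', hB']
  ring

/-- The Euler-factor identity at primes `p ∤ al` verified in Section 6.1. -/
theorem euler_factor_identity (x y z q : ℂ)
    (hq0 : q ≠ 0) (hq1 : q ≠ 1) (hq1' : q ≠ -1)
    (hx1 : x ≠ 1) (hx1' : x ≠ -1) (hy1 : y ≠ 1) (hy1' : y ≠ -1)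
    (hz1 : z ≠ 1) (hz1' : z ≠ -1) :
    let T : ℂ := (1 / 2) * (1 / ((1 - x) * (1 - y) * (1 - z)) +
      1 / ((1 + x) * (1 + y) * (1 + z)))
    let U : ℂ := (1 / 2) * (1 / ((1 - x) * (1 - y) * (1 - z)) -
      1 / ((1 + x) * (1 + y) * (1 + z)))
    let Q : ℂ := (1 - q⁻¹ ^ 2) * (T + (1 / (q ^ 2 * (1 - q⁻¹ ^ 2))) *
      (T - (x + y + z) * U + (x * y + x * z + y * z) * T - x * y * z * U))
    1 + (1 - q⁻¹) * (-1 + T) = 1 + (1 + q⁻¹)⁻¹ * (-1 + Q) := by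
  intro T U Q
  have h1x : (1 : ℂ) - x ≠ 0 := sub_ne_zero.mpr (Ne.symm hx1)
  have h2x : (1 : ℂ) + x ≠ 0 := fun h => hx1' (by linear_combination h)
  have h1y : (1 : ℂ) - y ≠ 0 := sub_ne_zero.mpr (Ne.symm hy1)
  have h2y : (1 : ℂ) + y ≠ 0 := fun h => hy1' (by linear_combination h)
  have h1z : (1 : ℂ) - z ≠ 0 := sub_ne_zero.mpr (Ne.symm hz1)
  have h2z : (1 : ℂ) + z ≠ 0 := fun h => hz1' (by linear_combination h)
  have hqm : q - 1 ≠ 0 := sub_ne_zero.mpr hq1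
  have hqp : q + 1 ≠ 0 := fun h => hq1' (by linear_combination h)
  have eA : (1 - x) * (1 - y) * (1 - z) =
      1 - (x + y + z) + (x * y + x * z + y * z) - x * y * z := by ring
  have eB : (1 + x) * (1 + y) * (1 + z) =
      1 + (x + y + z) + (x * y + x * z + y * z) + x * y * z := by ring
  have hA : (1 : ℂ) - (x + y + z) + (x * y + x * z + y * z) - x * y * z ≠ 0 := by
    rw [← eA]; exact mul_ne_zero (mul_ne_zero h1x h1y) h1z
  have hB : (1 : ℂ) + (x + y + z) + (x * y + x * z + y * z) + x * y * z ≠ 0 := by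
    rw [← eB]; exact mul_ne_zero (mul_ne_zero h2x h2y) h2z
  have e1 : ((1 : ℂ) + q⁻¹)⁻¹ = q / (q + 1) := by
    rw [show (1 : ℂ) + q⁻¹ = (q + 1) / q by field_simp, inv_div]
  have e2 : (1 : ℂ) / (q ^ 2 * (1 - q⁻¹ ^ 2)) = 1 / ((q - 1) * (q + 1)) := by
    rw [show q ^ 2 * (1 - q⁻¹ ^ 2) = (q - 1) * (q + 1) by field_simp; ring]
  have e3 : (1 : ℂ) - q⁻¹ ^ 2 = (q - 1) * (q + 1) / q ^ 2 := by field_simp; ring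
  have e4 : (1 : ℂ) - q⁻¹ = 1 - 1 / q := by rw [one_div]
  have e2' : (1 : ℂ) / (q ^ 2 * ((q - 1) * (q + 1) / q ^ 2)) = 1 / ((q - 1) * (q + 1)) := by
    rw [show q ^ 2 * ((q - 1) * (q + 1) / q ^ 2) = (q - 1) * (q + 1) by field_simp]
  simp only [T, U, Q, eA, eB, e1, e2, e3, e4, e2']
  exact euler_key (x + y + z) (x * y + x * z + y * z) (x * y * z) q hq0 hqm hqp hA hB
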